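/- For T > 0 and z, w ∈ Δ, the kernel K₀(z,w;T) = (z w̄/π) e^{-(z² + w̄²)/(4T)} (1/(z² + w̄²)² + 1/(4T(z² + w̄²))) is positive semidefinite on Δ: for any z₁,…,z_N ∈ Δ and c₁,…,c_N ∈ ℂ, Σ_{j,k} c_j c̄_k K₀(z_j, z_k; T) ≥ 0. -/

import Mathlib

open Complex ComplexOrder

open MeasureTheory Set Filter Real

lemma re_sq_pos {z : ℂ} (h0 : z ≠ 0) (h : |Complex.arg z| < Real.pi / 4) :
    0 < (z ^ 2).re := by
  have habs : 0 < ‖z‖ := norm_pos_iff.mpr h0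
  have hre : (z ^ 2).re = ‖z‖ ^ 2 * Real.cos (2 * Complex.arg z) := by
    have h1 := Complex.norm_mul_cos_arg z
    have h2 := Complex.norm_mul_sin_arg z
    have e1 : z.re * z.re = ‖z‖ ^ 2 * (Real.cos (Complex.arg z)) ^ 2 := by
      rw [← h1]; ring
    have e2 : z.im * z.im = ‖z‖ ^ 2 * (Real.sin (Complex.arg z)) ^ 2 := by
      rw [← h2]; ring
    have h4 : (Real.sin (Complex.arg z)) ^ 2 = 1 - (Real.cos (Complex.arg z)) ^ 2 := by
      have := Real.sin_sq_add_cos_sq (Complex.arg z); linarith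
    rw [Real.cos_two_mul, pow_two z, Complex.mul_re, e1, e2, h4]
    ring
  rw [hre]
  have : |2 * Complex.arg z| < Real.pi / 2 := by
    rw [abs_mul, _root_.abs_two]; linarith
  have hc : 0 < Real.cos (2 * Complex.arg z) :=
    Real.cos_pos_of_mem_Ioo ⟨by cases abs_lt.1 this; linarith, (abs_lt.1 this).2⟩
  positivity

lemma aux_exp_tendsto {r : ℝ} (hr : 0 < r) :
    Tendsto (fun s : ℝ => Real.exp (-(r * s))) atTop (nhds 0) :=
  Real.tendsto_exp_neg_atTop_nhds_zero.comp (tendsto_id.const_mul_atTop hr)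

lemma aux_mul_exp_tendsto {r : ℝ} (hr : 0 < r) :
    Tendsto (fun s : ℝ => s * Real.exp (-(r * s))) atTop (nhds 0) := by
  have h := tendsto_rpow_mul_exp_neg_mul_atTop_nhds_zero 1 r hr
  refine h.congr' ?_
  filter_upwards [eventually_gt_atTop 0] with x hx
  rw [Real.rpow_one, neg_mul]

lemma aux_int {a : ℂ} (ha : 0 < a.re) {b : ℝ} (hb : 0 < b) :
    IntegrableOn (fun s : ℝ => ((s : ℂ) + (b : ℂ)) * Complex.exp (-(a * s))) (Set.Ioi 0) ∧
    ∫ s in Set.Ioi (0:ℝ), ((s : ℂ) + (b : ℂ)) * Complex.exp (-(a * s)) = 1 / a ^ 2 + (b : ℂ) / a := by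
  have ha0 : a ≠ 0 := fun h => by simp [h] at ha
  -- integrability
  have hnorm : ∀ s : ℝ, 0 ≤ s → ‖((s : ℂ) + (b : ℂ)) * Complex.exp (-(a * s))‖
      = (s + b) * Real.exp (-(a.re * s)) := by
    intro s hs
    simp only [norm_mul]
    rw [Complex.norm_exp]
    have : ((s : ℂ) + (b : ℂ)) = ((s + b : ℝ) : ℂ) := by push_cast; ring
    rw [this, Complex.norm_real, Real.norm_eq_abs, _root_.abs_of_nonneg (by linarith : (0:ℝ) ≤ s + b)]
    congr 1
    simp [Complex.neg_re, Complex.mul_re]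
  have hgint : IntegrableOn (fun s : ℝ => (s + b) * Real.exp (-(a.re * s))) (Set.Ioi 0) := by
    apply integrable_of_isBigO_exp_neg (half_pos ha) (by fun_prop)
    refine Asymptotics.IsLittleO.isBigO (Asymptotics.isLittleO_of_tendsto
      (fun x hx => absurd hx (Real.exp_ne_zero _)) ?_)
    have htends : Tendsto (fun x : ℝ => (x + b) * Real.exp (-(a.re / 2 * x))) atTop (nhds 0) := by
      have := (aux_mul_exp_tendsto (half_pos ha)).add ((aux_exp_tendsto (half_pos ha)).const_mul b)
      simp only [mul_zero, add_zero] at this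
      exact this.congr fun x => by ring
    refine htends.congr fun x => ?_
    rw [mul_div_assoc, ← Real.exp_sub]
    congr 2
    ring
  have hint : IntegrableOn (fun s : ℝ => ((s : ℂ) + (b : ℂ)) * Complex.exp (-(a * s))) (Set.Ioi 0) := by
    have hmeas : AEStronglyMeasurable (fun s : ℝ => ((s : ℂ) + (b : ℂ)) * Complex.exp (-(a * s)))
        (volume.restrict (Set.Ioi 0)) := by
      apply Continuous.aestronglyMeasurable
      exact (Complex.continuous_ofReal.add continuous_const).mul
        (((continuous_const.mul Complex.continuous_ofReal).neg).cexp)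
    refine hgint.integrable.mono' hmeas ?_
    filter_upwards [self_mem_ae_restrict measurableSet_Ioi] with s hs
    rw [hnorm s (le_of_lt hs)]
  refine ⟨hint, ?_⟩
  -- FTC
  set F : ℂ → ℂ := fun w => -((w + (b : ℂ)) / a + 1 / a ^ 2) * Complex.exp (-(a * w)) with hF
  have hderiv : ∀ w : ℂ, HasDerivAt F ((w + (b : ℂ)) * Complex.exp (-(a * w))) w := by
    intro w
    have h1 : HasDerivAt (fun w : ℂ => -(a * w)) (-a) w := by
      exact ((hasDerivAt_id w).const_mul a).neg.congr_deriv (by ring)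
    have h2 : HasDerivAt (fun w : ℂ => Complex.exp (-(a * w)))
        (Complex.exp (-(a * w)) * -a) w := h1.cexp
    have h3 : HasDerivAt (fun w : ℂ => -((w + (b : ℂ)) / a + 1 / a ^ 2)) (-(1 / a)) w := by
      exact ((((hasDerivAt_id w).add_const ((b:ℂ))).div_const a).add_const (1/a^2)).neg
    have := h3.mul h2
    refine this.congr_deriv ?_
    field_simp
    ring
  have htend : Tendsto (fun s : ℝ => F s) atTop (nhds 0) := by
    have T1 : Tendsto (fun s : ℝ => Complex.exp (-(a * s))) atTop (nhds 0) := by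
      rw [tendsto_zero_iff_norm_tendsto_zero]
      have : (fun s : ℝ => ‖Complex.exp (-(a * s))‖) = fun s => Real.exp (-(a.re * s)) := by
        funext s; rw [Complex.norm_exp]; congr 1
        simp [Complex.neg_re, Complex.mul_re]
      rw [this]; exact aux_exp_tendsto ha
    have T2 : Tendsto (fun s : ℝ => (s : ℂ) * Complex.exp (-(a * s))) atTop (nhds 0) := by
      rw [tendsto_zero_iff_norm_tendsto_zero]
      refine (aux_mul_exp_tendsto ha).congr' ?_
      filter_upwards [eventually_ge_atTop 0] with s hs
      simp only [norm_mul]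
      rw [Complex.norm_exp, Complex.norm_real, Real.norm_eq_abs, _root_.abs_of_nonneg hs]
      congr 2; simp [Complex.neg_re, Complex.mul_re]
    have := (T2.const_mul (-(1/a))).add (T1.const_mul (-((b:ℂ)/a + 1/a^2)))
    simp only [mul_zero, add_zero] at this
    refine this.congr fun s => ?_
    rw [hF]; ring
  have hcont : ContinuousWithinAt (fun s : ℝ => F s) (Set.Ici 0) 0 := by
    apply Continuous.continuousWithinAt; fun_prop
  have := integral_Ioi_of_hasDerivAt_of_tendsto hcont
    (fun x _ => (hderiv (x : ℂ)).comp_ofReal) hint htend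
  rw [this, hF]
  push_cast
  field_simp
  simp only [zero_mul, neg_zero, Complex.exp_zero]; ring


/-- The kernel `K₀(z,w;T)` on the sector `Δ`. -/
noncomputable def K0 (z w : ℂ) (T : ℝ) : ℂ :=
  (z * (starRingEnd ℂ) w / (Real.pi : ℂ)) *
    Complex.exp (-(z ^ 2 + ((starRingEnd ℂ) w) ^ 2) / (4 * (T : ℂ))) *
    (1 / (z ^ 2 + ((starRingEnd ℂ) w) ^ 2) ^ 2 +
      1 / (4 * (T : ℂ) * (z ^ 2 + ((starRingEnd ℂ) w) ^ 2)))

open MeasureTheory Set Filter Real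

noncomputable def fG (T : ℝ) (v : ℂ) (s : ℝ) : ℂ :=
  ((Real.sqrt (s + 1 / (4 * T))) : ℂ) * Complex.exp (-(v ^ 2 * s))

noncomputable def cG (T : ℝ) (cc v : ℂ) : ℂ :=
  cc * v * Complex.exp (-(v ^ 2) / (4 * (T : ℂ))) / ((Real.sqrt Real.pi) : ℂ)

lemma pair_lemma (T : ℝ) (hT : 0 < T) (zj zk cj ck : ℂ)
    (hzj : |Complex.arg zj| < Real.pi / 4) (hzk : |Complex.arg zk| < Real.pi / 4) :
    IntegrableOn
      (fun s => (cG T cj zj * fG T zj s) * (starRingEnd ℂ) (cG T ck zk * fG T zk s))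
      (Set.Ioi 0) ∧
    ∫ s in Set.Ioi (0:ℝ),
        (cG T cj zj * fG T zj s) * (starRingEnd ℂ) (cG T ck zk * fG T zk s)
      = cj * (starRingEnd ℂ) ck * K0 zj zk T := by
  by_cases hj : zj = 0
  · have hz0 : (fun s : ℝ => (cG T cj zj * fG T zj s) *
        (starRingEnd ℂ) (cG T ck zk * fG T zk s)) = fun _ => (0:ℂ) := by
      funext s; simp [cG, hj]
    rw [hz0]
    refine ⟨integrableOn_zero, ?_⟩
    simp [K0, hj]
  by_cases hk : zk = 0
  · have hz0 : (fun s : ℝ => (cG T cj zj * fG T zj s) *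
        (starRingEnd ℂ) (cG T ck zk * fG T zk s)) = fun _ => (0:ℂ) := by
      funext s; simp [cG, hk]
    rw [hz0]
    refine ⟨integrableOn_zero, ?_⟩
    simp [K0, hk]
  -- main case
  set a : ℂ := zj ^ 2 + ((starRingEnd ℂ) zk) ^ 2 with ha_def
  have hre : 0 < a.re := by
    have h1 := re_sq_pos hj hzj
    have h2 := re_sq_pos hk hzk
    have h3 : (((starRingEnd ℂ) zk) ^ 2).re = (zk ^ 2).re := by
      rw [← map_pow]; exact Complex.conj_re _
    rw [ha_def, Complex.add_re, h3]
    linarith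
  have ha0 : a ≠ 0 := fun h => by simp [h] at hre
  set b : ℝ := 1 / (4 * T) with hb_def
  have hb : 0 < b := by positivity
  set C : ℂ := cj * (starRingEnd ℂ) ck * zj * (starRingEnd ℂ) zk *
      Complex.exp (-a / (4 * (T : ℂ))) / (Real.pi : ℂ) with hC_def
  have hpt : Set.EqOn
      (fun s : ℝ => (cG T cj zj * fG T zj s) * (starRingEnd ℂ) (cG T ck zk * fG T zk s))
      (fun s : ℝ => C * (((s : ℂ) + (b : ℂ)) * Complex.exp (-(a * s)))) (Set.Ioi 0) := by
    intro s hs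
    have hs' : (0:ℝ) < s := hs
    have hsb : ((Real.sqrt (s + b) : ℝ) : ℂ) * ((Real.sqrt (s + b) : ℝ) : ℂ)
        = ((s : ℂ) + (b : ℂ)) := by
      rw [← Complex.ofReal_mul, Real.mul_self_sqrt (by linarith)]
      push_cast; ring
    have hpi : ((Real.sqrt Real.pi : ℝ) : ℂ) * ((Real.sqrt Real.pi : ℝ) : ℂ)
        = (Real.pi : ℂ) := by
      rw [← Complex.ofReal_mul, Real.mul_self_sqrt Real.pi_pos.le]
    have he1 : Complex.exp (-(zj ^ 2 * s)) * Complex.exp (-(((starRingEnd ℂ) zk) ^ 2 * s))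
        = Complex.exp (-(a * s)) := by
      rw [← Complex.exp_add]; congr 1; rw [ha_def]; ring
    have he2 : Complex.exp (-(zj ^ 2) / (4 * (T : ℂ))) *
        Complex.exp (-(((starRingEnd ℂ) zk) ^ 2) / (4 * (T : ℂ)))
        = Complex.exp (-a / (4 * (T : ℂ))) := by
      rw [← Complex.exp_add]; congr 1; rw [ha_def]; ring
    simp only [cG, fG, hC_def, map_mul, map_div₀, Complex.conj_ofReal,
      ← Complex.exp_conj, map_neg, map_pow, map_ofNat]
    rw [← hsb, ← hpi, ← he1, ← he2]
    ring
  have haux := aux_int hre hb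
  constructor
  · exact MeasureTheory.IntegrableOn.congr_fun (haux.1.const_mul C) hpt.symm measurableSet_Ioi
  · rw [MeasureTheory.setIntegral_congr_fun measurableSet_Ioi hpt,
      MeasureTheory.integral_const_mul, haux.2, hC_def, K0, ← ha_def, hb_def]
    have hπ : (Real.pi : ℂ) ≠ 0 := Complex.ofReal_ne_zero.2 Real.pi_ne_zero
    have hT0 : (T : ℂ) ≠ 0 := Complex.ofReal_ne_zero.2 hT.ne'
    push_cast
    field_simp

/-- For `T > 0`, `K₀(·,·;T)` is a positive semidefinite kernel on the sector
`Δ = {z : |arg z| < π/4}`. -/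
theorem K0_posSemidef (T : ℝ) (hT : 0 < T) (N : ℕ) (z : Fin N → ℂ)
    (hz : ∀ j, |Complex.arg (z j)| < Real.pi / 4) (c : Fin N → ℂ) :
    0 ≤ ∑ j, ∑ k, c j * (starRingEnd ℂ) (c k) * K0 (z j) (z k) T := by
  have key := fun j k => pair_lemma T hT (z j) (z k) (c j) (c k) (hz j) (hz k)
  have h2 : ∑ j, ∑ k, c j * (starRingEnd ℂ) (c k) * K0 (z j) (z k) T
      = ∫ s in Set.Ioi (0:ℝ), ∑ j, ∑ k,
          (cG T (c j) (z j) * fG T (z j) s) *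
            (starRingEnd ℂ) (cG T (c k) (z k) * fG T (z k) s) := by
    rw [MeasureTheory.integral_finset_sum _
      (fun j _ => MeasureTheory.integrable_finset_sum _ (fun k _ => (key j k).1))]
    refine Finset.sum_congr rfl fun j _ => ?_
    rw [MeasureTheory.integral_finset_sum _ (fun k _ => (key j k).1)]
    exact Finset.sum_congr rfl fun k _ => ((key j k).2).symm
  have h3 : ∀ s : ℝ, ∑ j, ∑ k,
      (cG T (c j) (z j) * fG T (z j) s) *
        (starRingEnd ℂ) (cG T (c k) (z k) * fG T (z k) s)
      = ((Complex.normSq (∑ j, cG T (c j) (z j) * fG T (z j) s) : ℝ) : ℂ) := by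
    intro s
    rw [← Complex.mul_conj, map_sum, Finset.sum_mul_sum]
  rw [h2]
  simp_rw [h3]
  have h4 : (∫ s in Set.Ioi (0:ℝ),
        ((Complex.normSq (∑ j, cG T (c j) (z j) * fG T (z j) s) : ℝ) : ℂ))
      = ((∫ s in Set.Ioi (0:ℝ),
          Complex.normSq (∑ j, cG T (c j) (z j) * fG T (z j) s) : ℝ) : ℂ) :=
    integral_ofReal
  rw [h4]
  exact Complex.zero_le_real.2 (MeasureTheory.integral_nonneg fun s => Complex.normSq_nonneg _)
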